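/- The quotient ring ℚ[x₁,x₂,y₁,y₂]/(e₁(y)−e₁(x), e₂(y)−e₂(x)) is a free module of rank 2 over the subring ℚ[x₁,x₂], with basis {1, y₂−y₁} (equivalently, generated freely by the classes of 1 and y₂−y₁). -/

import Mathlib

open MvPolynomial

/-- The ideal `(e₁(y)−e₁(x), e₂(y)−e₂(x)) ⊆ ℚ[x₁,x₂,y₁,y₂]`
(with `x₁ = X 0`, `x₂ = X 1`, `y₁ = X 2`, `y₂ = X 3`). -/
noncomputable def soergelIdeal : Ideal (MvPolynomial (Fin 4) ℚ) :=
  Ideal.span ({X 2 + X 3 - X 0 - X 1, X 2 * X 3 - X 0 * X 1} :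
    Set (MvPolynomial (Fin 4) ℚ))

/-- The structure map `ℚ[x₁,x₂] → ℚ[x₁,x₂,y₁,y₂]/I`. -/
noncomputable def structMap :
    MvPolynomial (Fin 2) ℚ →+* MvPolynomial (Fin 4) ℚ ⧸ soergelIdeal :=
  (Ideal.Quotient.mk soergelIdeal).comp
    (rename (Fin.castAdd 2) : MvPolynomial (Fin 2) ℚ →ₐ[ℚ] MvPolynomial (Fin 4) ℚ).toRingHom

noncomputable instance :
    Module (MvPolynomial (Fin 2) ℚ) (MvPolynomial (Fin 4) ℚ ⧸ soergelIdeal) :=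
  Module.compHom _ structMap

namespace SoergelAux

abbrev R : Type := MvPolynomial (Fin 2) ℚ
abbrev A : Type := MvPolynomial (Fin 4) ℚ ⧸ soergelIdeal

noncomputable def fpoly : Polynomial R :=
  Polynomial.X ^ 2 - Polynomial.C ((X 0 + X 1) ^ 2 - 4 * (X 0 * X 1))

lemma fmonic : fpoly.Monic := Polynomial.monic_X_pow_sub_C _ two_ne_zero

lemma fdeg : fpoly.natDegree = 2 := Polynomial.natDegree_X_pow_sub_C

noncomputable def B : Type := AdjoinRoot fpoly

lemma hroot : (AdjoinRoot.root fpoly) ^ 2 =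
    AdjoinRoot.of fpoly ((X 0 + X 1) ^ 2 - 4 * (X 0 * X 1)) := by
  have h : AdjoinRoot.mk fpoly
      (Polynomial.X ^ 2 - Polynomial.C ((X 0 + X 1) ^ 2 - 4 * (X 0 * X 1))) = 0 := by
    rw [← fpoly]; exact AdjoinRoot.mk_self
  rw [map_sub (AdjoinRoot.mk fpoly), sub_eq_zero,
    map_pow (AdjoinRoot.mk fpoly), AdjoinRoot.mk_X, AdjoinRoot.mk_C] at h
  exact h

lemma h2 : (AdjoinRoot.of fpoly) (C (1/2 : ℚ)) * 2 = 1 := by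
  have : (C (1/2 : ℚ) * 2 : R) = 1 := by
    rw [show (2 : R) = C 2 from (map_ofNat C 2).symm, ← map_mul]
    norm_num
  rw [show (2 : AdjoinRoot fpoly) = AdjoinRoot.of fpoly 2 from (map_ofNat _ 2).symm,
    ← map_mul, this, map_one]

noncomputable def gvec : Fin 4 → AdjoinRoot fpoly :=
  ![AdjoinRoot.of fpoly (X 0), AdjoinRoot.of fpoly (X 1),
    AdjoinRoot.of fpoly (C (1/2 : ℚ)) * (AdjoinRoot.of fpoly (X 0 + X 1) - AdjoinRoot.root fpoly),
    AdjoinRoot.of fpoly (C (1/2 : ℚ)) * (AdjoinRoot.of fpoly (X 0 + X 1) + AdjoinRoot.root fpoly)]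

noncomputable def psi : MvPolynomial (Fin 4) ℚ →+* AdjoinRoot fpoly :=
  eval₂Hom ((AdjoinRoot.of fpoly).comp (C : ℚ →+* R)) gvec

lemma psi_ker : ∀ a ∈ soergelIdeal, psi a = 0 := by
  intro a ha
  rw [← RingHom.mem_ker]
  revert a ha
  rw [← SetLike.le_def, soergelIdeal, Ideal.span_le]
  rintro a (rfl | rfl)
  · simp only [SetLike.mem_coe, RingHom.mem_ker, map_sub, map_add, psi, eval₂Hom_X', gvec]
    simp only [Matrix.cons_val_zero, Matrix.cons_val_one, Matrix.head_cons,
      Matrix.cons_val_two, Matrix.cons_val_three, Matrix.tail_cons, map_add]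
    ring_nf
    linear_combination (AdjoinRoot.of fpoly (X 0) + AdjoinRoot.of fpoly (X 1)) * h2
  · simp only [SetLike.mem_coe, RingHom.mem_ker, map_sub, map_mul, psi, eval₂Hom_X', gvec]
    simp only [Matrix.cons_val_zero, Matrix.cons_val_one, Matrix.head_cons,
      Matrix.cons_val_two, Matrix.cons_val_three, Matrix.tail_cons, map_add]
    have hr := hroot
    rw [map_sub, map_pow, map_add, map_mul, map_mul (AdjoinRoot.of fpoly) (X 0) (X 1)] at hr
    set k := AdjoinRoot.of fpoly (C (1/2 : ℚ))
    set a := AdjoinRoot.of fpoly (X 0)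
    set b := AdjoinRoot.of fpoly (X 1)
    set r := AdjoinRoot.root fpoly
    have h4 : (AdjoinRoot.of fpoly) 4 = 4 := map_ofNat _ 4
    rw [h4] at hr
    linear_combination (-(k^2)) * hr + ((2*k + 1) * (a*b)) * h2

noncomputable def psibar : A →+* AdjoinRoot fpoly :=
  Ideal.Quotient.lift soergelIdeal psi psi_ker

lemma chi_cond : fpoly.eval₂ structMap (Ideal.Quotient.mk soergelIdeal (X 3 - X 2)) = 0 := by
  have h0 : Fin.castAdd 2 (0 : Fin 2) = (0 : Fin 4) := rfl
  have h1 : Fin.castAdd 2 (1 : Fin 2) = (1 : Fin 4) := rfl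
  have hs : structMap ((X 0 + X 1) ^ 2 - 4 * (X 0 * X 1)) =
      Ideal.Quotient.mk soergelIdeal
        (((X 0 + X 1) ^ 2 - 4 * (X 0 * X 1)) : MvPolynomial (Fin 4) ℚ) := by
    simp only [structMap, RingHom.coe_comp, Function.comp_apply, AlgHom.toRingHom_eq_coe,
      RingHom.coe_coe]
    congr 1
    simp only [map_sub, map_add, map_mul, map_pow, map_ofNat, rename_X, h0, h1]
  rw [fpoly]
  simp only [Polynomial.eval₂_sub, Polynomial.eval₂_pow, Polynomial.eval₂_X, Polynomial.eval₂_C]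
  rw [hs, ← map_pow, ← map_sub, Ideal.Quotient.eq_zero_iff_mem, soergelIdeal,
    Ideal.mem_span_pair]
  exact ⟨X 2 + X 3 + X 0 + X 1, -4, by ring⟩

noncomputable def chi : AdjoinRoot fpoly →+* A :=
  AdjoinRoot.lift structMap (Ideal.Quotient.mk soergelIdeal (X 3 - X 2)) chi_cond

end SoergelAux

namespace SoergelAux

lemma chi_of (r : R) : chi (AdjoinRoot.of fpoly r) = structMap r :=
  AdjoinRoot.lift_of chi_cond

lemma chi_root : chi (AdjoinRoot.root fpoly) =
    Ideal.Quotient.mk soergelIdeal (X 3 - X 2) :=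
  AdjoinRoot.lift_root chi_cond

lemma psibar_mk (p : MvPolynomial (Fin 4) ℚ) :
    psibar (Ideal.Quotient.mk soergelIdeal p) = psi p :=
  Ideal.Quotient.lift_mk _ _ _

lemma h0' : Fin.castAdd 2 (0 : Fin 2) = (0 : Fin 4) := rfl
lemma h1' : Fin.castAdd 2 (1 : Fin 2) = (1 : Fin 4) := rfl

lemma psibar_structMap (r : R) : psibar (structMap r) = AdjoinRoot.of fpoly r := by
  have key : psi.comp
      ((rename (Fin.castAdd 2) : MvPolynomial (Fin 2) ℚ →ₐ[ℚ] MvPolynomial (Fin 4) ℚ) :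
        MvPolynomial (Fin 2) ℚ →+* MvPolynomial (Fin 4) ℚ) = AdjoinRoot.of fpoly := by
    apply MvPolynomial.ringHom_ext
    · intro q
      simp [psi]
    · intro i
      fin_cases i
      · show psi (rename (Fin.castAdd 2) (X 0)) = AdjoinRoot.of fpoly (X 0)
        rw [rename_X, h0']
        simp [psi, gvec]
      · show psi (rename (Fin.castAdd 2) (X 1)) = AdjoinRoot.of fpoly (X 1)
        rw [rename_X, h1']
        simp [psi, gvec]
  rw [structMap]
  simp only [RingHom.coe_comp, Function.comp_apply, AlgHom.toRingHom_eq_coe, RingHom.coe_coe]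
  rw [psibar_mk]
  exact RingHom.congr_fun key r

lemma right_inverse : Function.RightInverse psibar chi := by
  have key : (chi.comp psibar).comp (Ideal.Quotient.mk soergelIdeal) =
      Ideal.Quotient.mk soergelIdeal := by
    apply MvPolynomial.ringHom_ext
    · intro q
      simp only [RingHom.coe_comp, Function.comp_apply]
      rw [psibar_mk]
      have : psi (C q) = AdjoinRoot.of fpoly (C q) := by simp [psi]
      rw [this, chi_of, structMap]
      simp
    · intro i
      simp only [RingHom.coe_comp, Function.comp_apply]
      rw [psibar_mk]
      fin_cases i
      · show chi (psi (X 0)) = Ideal.Quotient.mk soergelIdeal (X 0)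
        have : psi (X 0) = AdjoinRoot.of fpoly (X 0) := by simp [psi, gvec]
        rw [this, chi_of, structMap]
        simp [h0']
      · show chi (psi (X 1)) = Ideal.Quotient.mk soergelIdeal (X 1)
        have : psi (X 1) = AdjoinRoot.of fpoly (X 1) := by simp [psi, gvec]
        rw [this, chi_of, structMap]
        simp [h1']
      · show chi (psi (X 2)) = Ideal.Quotient.mk soergelIdeal (X 2)
        have : psi (X 2) = AdjoinRoot.of fpoly (C (1/2 : ℚ)) *
            (AdjoinRoot.of fpoly (X 0 + X 1) - AdjoinRoot.root fpoly) := by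
          simp [psi, gvec]
        rw [this, map_mul, map_sub, chi_of, chi_of, chi_root, structMap]
        simp only [RingHom.coe_comp, Function.comp_apply, AlgHom.toRingHom_eq_coe,
          RingHom.coe_coe, map_add, rename_X, h0', h1', rename_C]
        rw [← map_add, ← map_sub, ← map_mul, Ideal.Quotient.eq]
        rw [soergelIdeal, Ideal.mem_span_pair]
        have hc : (C (1/2 : ℚ) : MvPolynomial (Fin 4) ℚ) * 2 = 1 := by
          rw [show (2 : MvPolynomial (Fin 4) ℚ) = C 2 from (map_ofNat C 2).symm, ← map_mul]
          norm_num
        exact ⟨-C (1/2 : ℚ), 0, by linear_combination (-(X 2 : MvPolynomial (Fin 4) ℚ)) * hc⟩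
      · show chi (psi (X 3)) = Ideal.Quotient.mk soergelIdeal (X 3)
        have : psi (X 3) = AdjoinRoot.of fpoly (C (1/2 : ℚ)) *
            (AdjoinRoot.of fpoly (X 0 + X 1) + AdjoinRoot.root fpoly) := by
          simp [psi, gvec]
        rw [this, map_mul, map_add, chi_of, chi_of, chi_root, structMap]
        simp only [RingHom.coe_comp, Function.comp_apply, AlgHom.toRingHom_eq_coe,
          RingHom.coe_coe, map_add, rename_X, h0', h1', rename_C]
        rw [← map_add, ← map_add, ← map_mul, Ideal.Quotient.eq]
        rw [soergelIdeal, Ideal.mem_span_pair]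
        have hc : (C (1/2 : ℚ) : MvPolynomial (Fin 4) ℚ) * 2 = 1 := by
          rw [show (2 : MvPolynomial (Fin 4) ℚ) = C 2 from (map_ofNat C 2).symm, ← map_mul]
          norm_num
        exact ⟨-C (1/2 : ℚ), 0, by linear_combination (-(X 3 : MvPolynomial (Fin 4) ℚ)) * hc⟩
  intro a
  obtain ⟨p, rfl⟩ := Ideal.Quotient.mk_surjective a
  exact RingHom.congr_fun key p

lemma left_inverse : Function.LeftInverse psibar chi := by
  have key : (psibar.comp chi).comp (AdjoinRoot.mk fpoly) = AdjoinRoot.mk fpoly := by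
    apply Polynomial.ringHom_ext'
    · apply RingHom.ext
      intro r
      simp only [RingHom.coe_comp, Function.comp_apply]
      rw [show (AdjoinRoot.mk fpoly) (Polynomial.C r) = AdjoinRoot.of fpoly r from rfl,
        chi_of, psibar_structMap]
    · simp only [RingHom.coe_comp, Function.comp_apply, AdjoinRoot.mk_X]
      rw [chi_root, psibar_mk, map_sub]
      have e3 : psi (X 3) = AdjoinRoot.of fpoly (C (1/2 : ℚ)) *
          (AdjoinRoot.of fpoly (X 0 + X 1) + AdjoinRoot.root fpoly) := by simp [psi, gvec]
      have e2 : psi (X 2) = AdjoinRoot.of fpoly (C (1/2 : ℚ)) *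
          (AdjoinRoot.of fpoly (X 0 + X 1) - AdjoinRoot.root fpoly) := by simp [psi, gvec]
      rw [e3, e2]
      linear_combination AdjoinRoot.root fpoly * h2
  intro z
  obtain ⟨p, rfl⟩ := AdjoinRoot.mk_surjective z
  exact RingHom.congr_fun key p

noncomputable def elinear : AdjoinRoot fpoly ≃ₗ[R] A where
  toFun := chi
  invFun := psibar
  map_add' := map_add chi
  map_smul' := by
    intro r z
    simp only [RingHom.id_apply]
    rw [Algebra.smul_def, map_mul, AdjoinRoot.algebraMap_eq, chi_of]
    rfl
  left_inv := left_inverse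
  right_inv := right_inverse

end SoergelAux

open SoergelAux in
/-- The quotient `ℚ[x₁,x₂,y₁,y₂]/(e₁(y)−e₁(x), e₂(y)−e₂(x))` is a free
`ℚ[x₁,x₂]`-module of rank 2 with basis `{1, y₂−y₁}`. -/
theorem soergel_free_rank_two :
    ∃ b : Module.Basis (Fin 2) (MvPolynomial (Fin 2) ℚ)
        (MvPolynomial (Fin 4) ℚ ⧸ soergelIdeal),
      b 0 = 1 ∧ b 1 = Ideal.Quotient.mk soergelIdeal (X 3 - X 2) := by
  set pb := AdjoinRoot.powerBasis' fmonic with hpb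
  refine ⟨((pb.basis.reindex (finCongr fdeg)).map elinear), ?_, ?_⟩
  · rw [Module.Basis.map_apply, Module.Basis.reindex_apply, pb.basis_eq_pow]
    show elinear (AdjoinRoot.root fpoly ^ (0 : ℕ)) = 1
    rw [pow_zero]
    exact map_one chi
  · rw [Module.Basis.map_apply, Module.Basis.reindex_apply, pb.basis_eq_pow]
    show elinear (AdjoinRoot.root fpoly ^ (1 : ℕ)) = Ideal.Quotient.mk soergelIdeal (X 3 - X 2)
    rw [pow_one]
    exact chi_root
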